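/- Let X be a nonempty finite type, let p_d and p_n be pmfs on X with p_n x > 0 for every x, let 0 < α < 1, ν > 0, and set q x = α * p_d x + (1 − α) * p_n x. Let k ∈ ℕ and let φ : ℝ^k → X → ℝ be such that for every x the map θ ↦ φ θ x is differentiable on ℝ^k. Define Ĵ : ℝ^k → ℝ by Ĵ(θ) = Σ_x q x * log (exp (φ θ x) / (exp (φ θ x) + ν * p_n x)) + ν * Σ_x p_n x * log (ν * p_n x / (exp (φ θ x) + ν * p_n x)), and define P0(θ, x) = exp (φ θ x) / (exp (φ θ x) + ν * p_n x) and P1(θ, x) = 1 − P0(θ, x). Then Ĵ is differentiable and its gradient at every θ ∈ ℝ^k is ∇Ĵ(θ) = α * Σ_x p_d x * P1(θ, x) * ∇_θ φ θ x + (1 − α) * Σ_x p_n x * P1(θ, x) * ∇_θ φ θ x − ν * Σ_x p_n x * P0(θ, x) * ∇_θ φ θ x. -/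

import Mathlib

open Real Finset

/-- Differentiability and gradient formula for the DNCE objective with interpolated data
distribution `q = α p_d + (1-α) p_n`:
`∇Ĵ(θ) = α Σ_x p_d x * P1(θ,x) • ∇_θ φ θ x + (1-α) Σ_x p_n x * P1(θ,x) • ∇_θ φ θ x
       − ν • Σ_x p_n x * P0(θ,x) • ∇_θ φ θ x`. -/
theorem stmt_8 {X : Type*} [Fintype X] [Nonempty X]
    (pd pn : X → ℝ)
    (hpd0 : ∀ x, 0 ≤ pd x) (hpd1 : ∑ x, pd x = 1)
    (hpn0 : ∀ x, 0 < pn x) (hpn1 : ∑ x, pn x = 1)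
    (α ν : ℝ) (hα0 : 0 < α) (hα1 : α < 1) (hν : 0 < ν)
    (q : X → ℝ) (hq : ∀ x, q x = α * pd x + (1 - α) * pn x)
    (k : ℕ)
    (φ : EuclideanSpace ℝ (Fin k) → X → ℝ)
    (hφ : ∀ x, Differentiable ℝ (fun θ => φ θ x))
    (Jhat : EuclideanSpace ℝ (Fin k) → ℝ)
    (hJhat : ∀ θ, Jhat θ = ∑ x, q x * Real.log (Real.exp (φ θ x) / (Real.exp (φ θ x) + ν * pn x))
        + ν * ∑ x, pn x * Real.log (ν * pn x / (Real.exp (φ θ x) + ν * pn x)))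
    (P0 P1 : EuclideanSpace ℝ (Fin k) → X → ℝ)
    (hP0 : ∀ θ x, P0 θ x = Real.exp (φ θ x) / (Real.exp (φ θ x) + ν * pn x))
    (hP1 : ∀ θ x, P1 θ x = 1 - P0 θ x) :
    Differentiable ℝ Jhat ∧
      ∀ θ, gradient Jhat θ =
        α • (∑ x, (pd x * P1 θ x) • gradient (fun θ' => φ θ' x) θ)
          + (1 - α) • (∑ x, (pn x * P1 θ x) • gradient (fun θ' => φ θ' x) θ)
          - ν • ∑ x, (pn x * P0 θ x) • gradient (fun θ' => φ θ' x) θ := by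
  have hu : ∀ θ x, 0 < Real.exp (φ θ x) + ν * pn x := fun θ x =>
    add_pos (Real.exp_pos _) (mul_pos hν (hpn0 x))
  have hJ' : Jhat = fun θ => (∑ x, q x * (φ θ x - Real.log (Real.exp (φ θ x) + ν * pn x)))
      + ν * ∑ x, pn x * (Real.log (ν * pn x) - Real.log (Real.exp (φ θ x) + ν * pn x)) := by
    funext θ
    rw [hJhat θ]
    congr 1
    · exact Finset.sum_congr rfl fun x _ => by
        rw [Real.log_div (Real.exp_ne_zero _) (hu θ x).ne', Real.log_exp]
    · congr 1
      exact Finset.sum_congr rfl fun x _ => by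
        rw [Real.log_div (mul_pos hν (hpn0 x)).ne' (hu θ x).ne']
  have key : ∀ θ, HasFDerivAt Jhat
      ((∑ x, (q x * P1 θ x) • fderiv ℝ (fun θ' => φ θ' x) θ)
        + ν • ∑ x, (-(pn x * P0 θ x)) • fderiv ℝ (fun θ' => φ θ' x) θ) θ := by
    intro θ
    rw [hJ']
    have hφd : ∀ x, HasFDerivAt (fun θ' => φ θ' x) (fderiv ℝ (fun θ' => φ θ' x) θ) θ :=
      fun x => ((hφ x) θ).hasFDerivAt
    have hlog : ∀ x, HasFDerivAt (fun θ' => Real.log (Real.exp (φ θ' x) + ν * pn x))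
        ((P0 θ x) • fderiv ℝ (fun θ' => φ θ' x) θ) θ := by
      intro x
      have h1 : HasFDerivAt (fun θ' => Real.exp (φ θ' x) + ν * pn x)
          (Real.exp (φ θ x) • fderiv ℝ (fun θ' => φ θ' x) θ) θ :=
        ((hφd x).exp).add_const _
      have h2 := (Real.hasDerivAt_log (hu θ x).ne').comp_hasFDerivAt θ h1
      rw [show P0 θ x • fderiv ℝ (fun θ' => φ θ' x) θ = (Real.exp (φ θ x) + ν * pn x)⁻¹ • Real.exp (φ θ x) • fderiv ℝ (fun θ' => φ θ' x) θ by rw [smul_smul, hP0, div_eq_inv_mul]]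
      exact h2
    have hA : HasFDerivAt
        (fun θ' => ∑ x, q x * (φ θ' x - Real.log (Real.exp (φ θ' x) + ν * pn x)))
        (∑ x, (q x * P1 θ x) • fderiv ℝ (fun θ' => φ θ' x) θ) θ := by
      refine HasFDerivAt.fun_sum fun x _ => ?_
      have h := ((hφd x).sub (hlog x)).const_mul (q x)
      rw [show (q x * P1 θ x) • fderiv ℝ (fun θ' => φ θ' x) θ = q x • (fderiv ℝ (fun θ' => φ θ' x) θ - P0 θ x • fderiv ℝ (fun θ' => φ θ' x) θ) by rw [hP1, ← smul_smul, sub_smul, one_smul]]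
      exact h
    have hB : HasFDerivAt
        (fun θ' => ∑ x, pn x * (Real.log (ν * pn x) - Real.log (Real.exp (φ θ' x) + ν * pn x)))
        (∑ x, (-(pn x * P0 θ x)) • fderiv ℝ (fun θ' => φ θ' x) θ) θ := by
      refine HasFDerivAt.fun_sum fun x _ => ?_
      have h := ((hasFDerivAt_const (Real.log (ν * pn x)) θ).sub (hlog x)).const_mul (pn x)
      rw [show (-(pn x * P0 θ x)) • fderiv ℝ (fun θ' => φ θ' x) θ = pn x • (0 - P0 θ x • fderiv ℝ (fun θ' => φ θ' x) θ) by rw [zero_sub, smul_neg, neg_smul, ← smul_smul]]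
      exact h
    exact hA.add (hB.const_mul ν)
  constructor
  · exact fun θ => ((key θ).differentiableAt)
  · intro θ
    have hgrad : gradient Jhat θ = (InnerProductSpace.toDual ℝ _).symm
        ((∑ x, (q x * P1 θ x) • fderiv ℝ (fun θ' => φ θ' x) θ)
          + ν • ∑ x, (-(pn x * P0 θ x)) • fderiv ℝ (fun θ' => φ θ' x) θ) := by
      rw [gradient, (key θ).fderiv]
    have hgx : ∀ x, (InnerProductSpace.toDual ℝ _).symm (fderiv ℝ (fun θ' => φ θ' x) θ)
        = gradient (fun θ' => φ θ' x) θ := fun x => rfl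
    simp only [hgrad, map_add, map_smul, map_sum, hgx]
    set g := fun x => gradient (fun θ' => φ θ' x) θ with hg
    have h1 : (∑ x, (q x * P1 θ x) • g x)
        = α • (∑ x, (pd x * P1 θ x) • g x) + (1 - α) • (∑ x, (pn x * P1 θ x) • g x) := by
      rw [Finset.smul_sum, Finset.smul_sum, ← Finset.sum_add_distrib]
      refine Finset.sum_congr rfl fun x _ => ?_
      rw [smul_smul, smul_smul, ← add_smul]
      congr 1
      rw [hq]; ring
    have h2 : (ν • ∑ x, (-(pn x * P0 θ x)) • g x)
        = -(ν • ∑ x, (pn x * P0 θ x) • g x) := by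
      simp [neg_smul, Finset.sum_neg_distrib]
    rw [h1, h2]; abel
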